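/- arXiv:2603.12231 — 2 statements merged into one kernel-verified Lean document; each statement's English description precedes it below -/
import Mathlib

section
/- Let A, B ∈ ℝ^{d×d}, K ≥ 1, W_K = ∑_{k=0}^{K-1} A^k B B^⊤ (A^⊤)^k, and suppose M_A, m_A, M_B, m_B with 0 < m_A ≤ M_A and 0 < m_B ≤ M_B satisfy: ‖A‖₂ ≤ M_A, ‖B‖₂ ≤ M_B, ‖A^⊤ u‖₂ ≥ m_A ‖u‖₂ and ‖B^⊤ u‖₂ ≥ m_B ‖u‖₂ for all u ∈ ℝ^d. Then W_K is positive definite, and for all unit vectors x, y ∈ ℝ^d, x^⊤ W_K x ≤ (M_B/m_B)² · ((∑_{k=0}^{K-1} M_A^{2k}) / (∑_{k=0}^{K-1} m_A^{2k})) · y^⊤ W_K y. In particular the condition number λ_max(W_K)/λ_min(W_K) is at most (M_B/m_B)² (∑_{k=0}^{K-1} M_A^{2k})/(∑_{k=0}^{K-1} m_A^{2k}). -/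
open Matrix
open scoped InnerProductSpace

/-- Apply a real matrix to a Euclidean vector. -/
noncomputable def mulVecE {m n : ℕ} (A : Matrix (Fin m) (Fin n) ℝ)
    (x : EuclideanSpace ℝ (Fin n)) : EuclideanSpace ℝ (Fin m) :=
  Matrix.toEuclideanLin A x

/-- The ℓ²-operator norm (largest singular value) of a real matrix. -/
noncomputable def l2OpNorm {m n : ℕ} (A : Matrix (Fin m) (Fin n) ℝ) : ℝ :=
  ‖LinearMap.toContinuousLinearMap (Matrix.toEuclideanLin A)‖

variable {d : ℕ}

lemma conjT_eq (M : Matrix (Fin d) (Fin d) ℝ) : Mᴴ = Mᵀ := by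
  ext i j; simp [Matrix.conjTranspose]

lemma mulVecE_mul (M N : Matrix (Fin d) (Fin d) ℝ) (x : EuclideanSpace ℝ (Fin d)) :
    mulVecE (M * N) x = mulVecE M (mulVecE N x) := by
  simp [mulVecE, Matrix.toEuclideanLin_apply, Matrix.mulVec_mulVec]

lemma inner_mulVecE (M : Matrix (Fin d) (Fin d) ℝ) (x y : EuclideanSpace ℝ (Fin d)) :
    ⟪x, mulVecE M y⟫_ℝ = ⟪mulVecE Mᵀ x, y⟫_ℝ := by
  have h := Matrix.toEuclideanLin_conjTranspose_eq_adjoint M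
  rw [conjT_eq] at h
  simp only [mulVecE, h, LinearMap.adjoint_inner_left]

lemma mulVecE_opNorm_le {M : Matrix (Fin d) (Fin d) ℝ} {c : ℝ} (h : l2OpNorm M ≤ c)
    (v : EuclideanSpace ℝ (Fin d)) : ‖mulVecE M v‖ ≤ c * ‖v‖ := by
  calc ‖mulVecE M v‖ = ‖LinearMap.toContinuousLinearMap (Matrix.toEuclideanLin M) v‖ := rfl
    _ ≤ l2OpNorm M * ‖v‖ := ContinuousLinearMap.le_opNorm _ _
    _ ≤ c * ‖v‖ := mul_le_mul_of_nonneg_right h (norm_nonneg v)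

lemma mulVecE_transpose_le {M : Matrix (Fin d) (Fin d) ℝ} {c : ℝ} (hc : 0 ≤ c)
    (h : ∀ v, ‖mulVecE M v‖ ≤ c * ‖v‖) (v : EuclideanSpace ℝ (Fin d)) :
    ‖mulVecE Mᵀ v‖ ≤ c * ‖v‖ := by
  rcases eq_or_lt_of_le (norm_nonneg (mulVecE Mᵀ v)) with h0 | h0
  · rw [← h0]; positivity
  · have key : ‖mulVecE Mᵀ v‖ ^ 2 = ⟪v, mulVecE M (mulVecE Mᵀ v)⟫_ℝ := by
      rw [inner_mulVecE, real_inner_self_eq_norm_sq]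
    have h1 : ⟪v, mulVecE M (mulVecE Mᵀ v)⟫_ℝ ≤ ‖v‖ * ‖mulVecE M (mulVecE Mᵀ v)‖ :=
      real_inner_le_norm _ _
    have h2 : ‖mulVecE M (mulVecE Mᵀ v)‖ ≤ c * ‖mulVecE Mᵀ v‖ := h _
    nlinarith [norm_nonneg v]

lemma mulVecE_sum {ι : Type*} (s : Finset ι) (M : ι → Matrix (Fin d) (Fin d) ℝ)
    (x : EuclideanSpace ℝ (Fin d)) :
    mulVecE (∑ i ∈ s, M i) x = ∑ i ∈ s, mulVecE (M i) x := by
  simp [mulVecE, map_sum, LinearMap.sum_apply]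

lemma mulVecE_one (v : EuclideanSpace ℝ (Fin d)) : mulVecE (1 : Matrix (Fin d) (Fin d) ℝ) v = v := by
  simp [mulVecE, Matrix.toEuclideanLin_apply, Matrix.one_mulVec]

lemma mulVecE_pow_le {M : Matrix (Fin d) (Fin d) ℝ} {c : ℝ} (hc : 0 ≤ c)
    (h : ∀ v, ‖mulVecE M v‖ ≤ c * ‖v‖) (k : ℕ) (v : EuclideanSpace ℝ (Fin d)) :
    ‖mulVecE (M ^ k) v‖ ≤ c ^ k * ‖v‖ := by
  induction k with
  | zero => simp [pow_zero, mulVecE_one]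
  | succ n ih =>
    rw [pow_succ' M n, mulVecE_mul]
    calc ‖mulVecE M (mulVecE (M ^ n) v)‖ ≤ c * ‖mulVecE (M ^ n) v‖ := h _
      _ ≤ c * (c ^ n * ‖v‖) := mul_le_mul_of_nonneg_left ih hc
      _ = c ^ (n + 1) * ‖v‖ := by ring

lemma mulVecE_pow_ge {M : Matrix (Fin d) (Fin d) ℝ} {c : ℝ} (hc : 0 ≤ c)
    (h : ∀ v, c * ‖v‖ ≤ ‖mulVecE M v‖) (k : ℕ) (v : EuclideanSpace ℝ (Fin d)) :
    c ^ k * ‖v‖ ≤ ‖mulVecE (M ^ k) v‖ := by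
  induction k with
  | zero => simp [pow_zero, mulVecE_one]
  | succ n ih =>
    rw [pow_succ' M n, mulVecE_mul]
    calc c ^ (n + 1) * ‖v‖ = c * (c ^ n * ‖v‖) := by ring
      _ ≤ c * ‖mulVecE (M ^ n) v‖ := mul_le_mul_of_nonneg_left ih hc
      _ ≤ ‖mulVecE M (mulVecE (M ^ n) v)‖ := h _
/-- Under two-sided singular-value bounds on `A` and `B`, the Gramian `W_K` is positive
definite, the ratio of its quadratic-form values over unit vectors is bounded by
`(M_B/m_B)² (∑ M_A^{2k})/(∑ m_A^{2k})`, and hence so is its condition number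
`λ_max(W_K)/λ_min(W_K)`. -/
theorem gramian_condition_number_bound {d : ℕ}
    (A B : Matrix (Fin d) (Fin d) ℝ)
    (K : ℕ) (hK : 1 ≤ K) (MA mA MB mB : ℝ)
    (hmA : 0 < mA) (hAm : mA ≤ MA) (hmB : 0 < mB) (hBm : mB ≤ MB)
    (hA : l2OpNorm A ≤ MA) (hB : l2OpNorm B ≤ MB)
    (hAlow : ∀ u : EuclideanSpace ℝ (Fin d), mA * ‖u‖ ≤ ‖mulVecE Aᵀ u‖)
    (hBlow : ∀ u : EuclideanSpace ℝ (Fin d), mB * ‖u‖ ≤ ‖mulVecE Bᵀ u‖)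
    (W : Matrix (Fin d) (Fin d) ℝ)
    (hW : W = ∑ k ∈ Finset.range K, A ^ k * B * Bᵀ * Aᵀ ^ k) :
    W.PosDef
    ∧ (∀ x y : EuclideanSpace ℝ (Fin d), ‖x‖ = 1 → ‖y‖ = 1 →
      ⟪x, mulVecE W x⟫_ℝ ≤ (MB / mB) ^ 2 *
        ((∑ k ∈ Finset.range K, MA ^ (2 * k)) / (∑ k ∈ Finset.range K, mA ^ (2 * k))) *
        ⟪y, mulVecE W y⟫_ℝ)
    ∧ (∀ μ ν : ℝ, Module.End.HasEigenvalue W.mulVecLin μ →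
        Module.End.HasEigenvalue W.mulVecLin ν →
      μ ≤ (MB / mB) ^ 2 *
        ((∑ k ∈ Finset.range K, MA ^ (2 * k)) / (∑ k ∈ Finset.range K, mA ^ (2 * k))) * ν) := by
  have hMA0 : 0 ≤ MA := le_trans hmA.le hAm
  have hMB0 : 0 ≤ MB := le_trans hmB.le hBm
  set SM : ℝ := ∑ k ∈ Finset.range K, MA ^ (2 * k) with hSM
  set Sm : ℝ := ∑ k ∈ Finset.range K, mA ^ (2 * k) with hSm
  have hne : (Finset.range K).Nonempty := Finset.nonempty_range_iff.mpr (by omega)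
  have hSm_pos : 0 < Sm := Finset.sum_pos (fun k _ => pow_pos hmA _) hne
  have hSM_nonneg : 0 ≤ SM := Finset.sum_nonneg fun k _ => pow_nonneg hMA0 _
  have hAup : ∀ v : EuclideanSpace ℝ (Fin d), ‖mulVecE Aᵀ v‖ ≤ MA * ‖v‖ :=
    mulVecE_transpose_le hMA0 (fun v => mulVecE_opNorm_le hA v)
  have hBup : ∀ v : EuclideanSpace ℝ (Fin d), ‖mulVecE Bᵀ v‖ ≤ MB * ‖v‖ :=
    mulVecE_transpose_le hMB0 (fun v => mulVecE_opNorm_le hB v)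
  have quad : ∀ x : EuclideanSpace ℝ (Fin d),
      ⟪x, mulVecE W x⟫_ℝ = ∑ k ∈ Finset.range K, ‖mulVecE Bᵀ (mulVecE (Aᵀ ^ k) x)‖ ^ 2 := by
    intro x
    rw [hW, mulVecE_sum, inner_sum]
    refine Finset.sum_congr rfl fun k _ => ?_
    have h1 : A ^ k * B * Bᵀ * Aᵀ ^ k = (A ^ k * B) * (Bᵀ * Aᵀ ^ k) := by
      rw [mul_assoc, mul_assoc]
    have h2 : (A ^ k * B)ᵀ = Bᵀ * Aᵀ ^ k := by
      rw [Matrix.transpose_mul, Matrix.transpose_pow]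
    rw [h1, mulVecE_mul, inner_mulVecE, h2, mulVecE_mul, real_inner_self_eq_norm_sq]
  have upper : ∀ x : EuclideanSpace ℝ (Fin d),
      ⟪x, mulVecE W x⟫_ℝ ≤ MB ^ 2 * SM * ‖x‖ ^ 2 := by
    intro x
    rw [quad x]
    calc ∑ k ∈ Finset.range K, ‖mulVecE Bᵀ (mulVecE (Aᵀ ^ k) x)‖ ^ 2
        ≤ ∑ k ∈ Finset.range K, MB ^ 2 * MA ^ (2 * k) * ‖x‖ ^ 2 := by
          refine Finset.sum_le_sum fun k _ => ?_
          have ha : ‖mulVecE (Aᵀ ^ k) x‖ ≤ MA ^ k * ‖x‖ := mulVecE_pow_le hMA0 hAup k x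
          have hb : ‖mulVecE Bᵀ (mulVecE (Aᵀ ^ k) x)‖ ≤ MB * (MA ^ k * ‖x‖) :=
            le_trans (hBup _) (mul_le_mul_of_nonneg_left ha hMB0)
          calc ‖mulVecE Bᵀ (mulVecE (Aᵀ ^ k) x)‖ ^ 2 ≤ (MB * (MA ^ k * ‖x‖)) ^ 2 :=
                pow_le_pow_left₀ (norm_nonneg _) hb 2
            _ = MB ^ 2 * MA ^ (2 * k) * ‖x‖ ^ 2 := by rw [mul_comm 2 k, pow_mul]; ring
      _ = MB ^ 2 * SM * ‖x‖ ^ 2 := by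
          rw [hSM, Finset.mul_sum, Finset.sum_mul]
  have lower : ∀ x : EuclideanSpace ℝ (Fin d),
      mB ^ 2 * Sm * ‖x‖ ^ 2 ≤ ⟪x, mulVecE W x⟫_ℝ := by
    intro x
    rw [quad x]
    calc mB ^ 2 * Sm * ‖x‖ ^ 2
        = ∑ k ∈ Finset.range K, mB ^ 2 * mA ^ (2 * k) * ‖x‖ ^ 2 := by
          rw [hSm, Finset.mul_sum, Finset.sum_mul]
      _ ≤ ∑ k ∈ Finset.range K, ‖mulVecE Bᵀ (mulVecE (Aᵀ ^ k) x)‖ ^ 2 := by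
          refine Finset.sum_le_sum fun k _ => ?_
          have ha : mA ^ k * ‖x‖ ≤ ‖mulVecE (Aᵀ ^ k) x‖ := mulVecE_pow_ge hmA.le hAlow k x
          have hb : mB * (mA ^ k * ‖x‖) ≤ ‖mulVecE Bᵀ (mulVecE (Aᵀ ^ k) x)‖ :=
            le_trans (mul_le_mul_of_nonneg_left ha hmB.le) (hBlow _)
          calc mB ^ 2 * mA ^ (2 * k) * ‖x‖ ^ 2 = (mB * (mA ^ k * ‖x‖)) ^ 2 := by
                rw [mul_comm 2 k, pow_mul]; ring
            _ ≤ ‖mulVecE Bᵀ (mulVecE (Aᵀ ^ k) x)‖ ^ 2 :=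
                pow_le_pow_left₀ (by positivity) hb 2
  have innerdot : ∀ x : Fin d → ℝ,
      ⟪((WithLp.equiv 2 (Fin d → ℝ)).symm x : EuclideanSpace ℝ (Fin d)),
        mulVecE W ((WithLp.equiv 2 (Fin d → ℝ)).symm x)⟫_ℝ = x ⬝ᵥ (W *ᵥ x) := by
    intro x
    simp [mulVecE, PiLp.inner_apply,
      RCLike.inner_apply, dotProduct]
    exact Finset.sum_congr rfl fun i _ => mul_comm _ _
  have hPosDef : W.PosDef := by
    refine Matrix.PosDef.of_dotProduct_mulVec_pos ?_ ?_
    · show Wᴴ = W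
      rw [conjT_eq, hW, Matrix.transpose_sum]
      refine Finset.sum_congr rfl fun k _ => ?_
      simp [Matrix.transpose_mul, Matrix.transpose_pow, Matrix.transpose_transpose, mul_assoc]
    · intro x hx
      have hxE : ((WithLp.equiv 2 (Fin d → ℝ)).symm x : EuclideanSpace ℝ (Fin d)) ≠ 0 := by
        simpa using hx
      have h1 := lower ((WithLp.equiv 2 (Fin d → ℝ)).symm x)
      rw [innerdot x] at h1
      have hnx : 0 < ‖((WithLp.equiv 2 (Fin d → ℝ)).symm x : EuclideanSpace ℝ (Fin d))‖ :=
        norm_pos_iff.mpr hxE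
      have : (0:ℝ) < x ⬝ᵥ (W *ᵥ x) := lt_of_lt_of_le (by positivity) h1
      simpa using this
  have ratio : ∀ x y : EuclideanSpace ℝ (Fin d), ‖x‖ = 1 → ‖y‖ = 1 →
      ⟪x, mulVecE W x⟫_ℝ ≤ (MB / mB) ^ 2 * (SM / Sm) * ⟪y, mulVecE W y⟫_ℝ := by
    intro x y hx hy
    have h1 := upper x
    have h2 := lower y
    rw [hx] at h1
    rw [hy] at h2
    simp only [one_pow, mul_one] at h1 h2
    have key : (MB / mB) ^ 2 * (SM / Sm) * (mB ^ 2 * Sm) = MB ^ 2 * SM := by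
      field_simp
      try ring
    calc ⟪x, mulVecE W x⟫_ℝ ≤ MB ^ 2 * SM := h1
      _ = (MB / mB) ^ 2 * (SM / Sm) * (mB ^ 2 * Sm) := key.symm
      _ ≤ (MB / mB) ^ 2 * (SM / Sm) * ⟪y, mulVecE W y⟫_ℝ := by
          apply mul_le_mul_of_nonneg_left h2
          positivity
  refine ⟨hPosDef, ratio, ?_⟩
  have eig : ∀ (u : Fin d → ℝ) (lam : ℝ), u ≠ 0 → W *ᵥ u = lam • u →
      ∃ z : EuclideanSpace ℝ (Fin d), ‖z‖ = 1 ∧ ⟪z, mulVecE W z⟫_ℝ = lam := by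
    intro u lam hu0 hWu
    set uE : EuclideanSpace ℝ (Fin d) := (WithLp.equiv 2 (Fin d → ℝ)).symm u with huE
    have huE0 : uE ≠ 0 := by simpa [huE] using hu0
    have hn : (0:ℝ) < ‖uE‖ := norm_pos_iff.mpr huE0
    refine ⟨‖uE‖⁻¹ • uE, ?_, ?_⟩
    · rw [norm_smul, norm_inv, norm_norm]
      field_simp
    · have hWuE : mulVecE W uE = lam • uE := by
        rw [huE]
        show Matrix.toEuclideanLin W ((WithLp.equiv 2 (Fin d → ℝ)).symm u) = _
        rw [WithLp.equiv_symm_apply, Matrix.toEuclideanLin_apply_piLp_toLp, hWu]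
        ext i
        simp
      have hsmul : mulVecE W (‖uE‖⁻¹ • uE) = ‖uE‖⁻¹ • mulVecE W uE := by
        show Matrix.toEuclideanLin W _ = _
        rw [_root_.map_smul]
        rfl
      rw [hsmul, hWuE, real_inner_smul_left, real_inner_smul_right, real_inner_smul_right,
        real_inner_self_eq_norm_sq]
      have hn' : ‖uE‖ ≠ 0 := hn.ne'
      field_simp
  intro μ ν hμ hν
  obtain ⟨v, hv⟩ := hμ.exists_hasEigenvector
  obtain ⟨w, hw⟩ := hν.exists_hasEigenvector
  obtain ⟨zx, hzx1, hzx2⟩ := eig v μ hv.right (by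
    have := hv.apply_eq_smul
    simpa [Matrix.mulVecLin_apply] using this)
  obtain ⟨zy, hzy1, hzy2⟩ := eig w ν hw.right (by
    have := hw.apply_eq_smul
    simpa [Matrix.mulVecLin_apply] using this)
  have := ratio zx zy hzx1 hzy1
  rw [hzx2, hzy2] at this
  exact this
end

section
/- Let states z_t ∈ ℝ^d evolve under z_{t+1} = A z_t + B a_t with A ∈ ℝ^{d×d}, B ∈ ℝ^{d×d_a}. Let v_t := z_{t+1} − z_t and suppose ‖v_t‖₂ = ‖v_{t+1}‖₂ = c > 0. Let C_t := ⟨v_t, v_{t+1}⟩/(‖v_t‖₂‖v_{t+1}‖₂) and suppose ‖a_{t+1} − a_t‖₂ ≤ Δ. Then, writing v̂_t := v_t/‖v_t‖₂, the deviation from straightness along the visited direction is bounded as ‖(A − I) v̂_t‖₂ ≤ √(2(1 − C_t)) + ‖B‖₂ Δ / c. -/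
open scoped InnerProductSpace

lemma mulVecE_sub_one {d : ℕ} (A : Matrix (Fin d) (Fin d) ℝ)
    (x : EuclideanSpace ℝ (Fin d)) : mulVecE (A - 1) x = mulVecE A x - x := by
  simp only [mulVecE, map_sub]
  simp [Matrix.toEuclideanLin]

lemma mulVecE_map_sub {m n : ℕ} (A : Matrix (Fin m) (Fin n) ℝ)
    (x y : EuclideanSpace ℝ (Fin n)) :
    mulVecE A (x - y) = mulVecE A x - mulVecE A y := by
  simp [mulVecE, map_sub]

lemma mulVecE_le {m n : ℕ} (A : Matrix (Fin m) (Fin n) ℝ)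
    (x : EuclideanSpace ℝ (Fin n)) : ‖mulVecE A x‖ ≤ l2OpNorm A * ‖x‖ :=
  (LinearMap.toContinuousLinearMap (Matrix.toEuclideanLin A)).le_opNorm x

/-- Under linear latent dynamics `z_{t+1} = A z_t + B a_t` with consecutive latent
velocities `v_t, v_{t+1}` of common norm `c > 0`, cosine similarity `C_t`, and action
increment bounded by `Δ`, the deviation from straightness along the visited unit
direction `v̂_t = v_t/‖v_t‖` satisfies
`‖(A − I) v̂_t‖ ≤ √(2(1 − C_t)) + ‖B‖₂ Δ / c`. -/
theorem cosine_similarity_controls_straightness {d da : ℕ}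
    (A : Matrix (Fin d) (Fin d) ℝ) (B : Matrix (Fin d) (Fin da) ℝ)
    (z : ℕ → EuclideanSpace ℝ (Fin d)) (a : ℕ → EuclideanSpace ℝ (Fin da))
    (hdyn : ∀ s, z (s + 1) = mulVecE A (z s) + mulVecE B (a s))
    (v : ℕ → EuclideanSpace ℝ (Fin d)) (hv : ∀ s, v s = z (s + 1) - z s)
    (t : ℕ) (c : ℝ) (hc : 0 < c) (hvt : ‖v t‖ = c) (hvt1 : ‖v (t + 1)‖ = c)
    (Ct : ℝ) (hCt : Ct = ⟪v t, v (t + 1)⟫_ℝ / (‖v t‖ * ‖v (t + 1)‖))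
    (Δ : ℝ) (hΔ : ‖a (t + 1) - a t‖ ≤ Δ) :
    ‖mulVecE (A - 1) ((‖v t‖)⁻¹ • v t)‖ ≤
      Real.sqrt (2 * (1 - Ct)) + l2OpNorm B * Δ / c := by
  have hc0 : c ≠ 0 := ne_of_gt hc
  -- velocity recursion
  have hvrec : v (t + 1) = mulVecE A (v t) + mulVecE B (a (t + 1) - a t) := by
    rw [hv (t + 1), hv t, hdyn (t + 1), hdyn t, mulVecE_map_sub, mulVecE_map_sub]
    abel
  have hkey : mulVecE (A - 1) (v t)
      = (v (t + 1) - v t) - mulVecE B (a (t + 1) - a t) := by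
    rw [mulVecE_sub_one, hvrec]; abel
  -- bound the unnormalized deviation
  have hBbd : ‖mulVecE B (a (t + 1) - a t)‖ ≤ l2OpNorm B * Δ := by
    refine (mulVecE_le B _).trans ?_
    have h0 : (0:ℝ) ≤ l2OpNorm B := norm_nonneg _
    exact mul_le_mul_of_nonneg_left hΔ h0
  have hbd : ‖mulVecE (A - 1) (v t)‖ ≤ ‖v (t + 1) - v t‖ + l2OpNorm B * Δ := by
    rw [hkey]
    exact (norm_sub_le _ _).trans (add_le_add le_rfl hBbd)
  -- sqrt identity
  have hip : ⟪v t, v (t + 1)⟫_ℝ = Ct * c ^ 2 := by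
    rw [hCt, hvt, hvt1, ← sq, div_mul_cancel₀ _ (pow_ne_zero 2 hc0)]
  have hw2 : ‖v (t + 1) - v t‖ ^ 2 = 2 * c ^ 2 - 2 * (Ct * c ^ 2) := by
    rw [norm_sub_sq_real, real_inner_comm, hip, hvt, hvt1]; ring
  have h2 : 2 * (1 - Ct) = (‖v (t + 1) - v t‖ / c) ^ 2 := by
    rw [div_pow, hw2]; field_simp
  have hsqrt : Real.sqrt (2 * (1 - Ct)) = ‖v (t + 1) - v t‖ / c := by
    rw [h2, Real.sqrt_sq (by positivity)]
  -- normalize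
  have hnorm : ‖mulVecE (A - 1) ((‖v t‖)⁻¹ • v t)‖
      = ‖mulVecE (A - 1) (v t)‖ / c := by
    have : mulVecE (A - 1) ((‖v t‖)⁻¹ • v t) = (‖v t‖)⁻¹ • mulVecE (A - 1) (v t) := by
      simp [mulVecE, map_smul]
    rw [this, norm_smul, hvt, Real.norm_eq_abs, abs_of_pos (inv_pos.mpr hc),
      inv_mul_eq_div]
  rw [hnorm, hsqrt]
  rw [← add_div, div_le_div_iff₀ hc hc]
  have := mul_le_mul_of_nonneg_right hbd (le_of_lt hc)
  linarith
end
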